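/- Let R be a commutative ring, A a commutative R-algebra, and μ♯ : A → R[t,t⁻¹] ⊗_R A a coaction of the Hopf algebra R[t,t⁻¹] on A. For each n ∈ ℤ set A_n = { a ∈ A : μ♯(a) = tⁿ ⊗ a }. Then each A_n is an R-submodule of A, the family (A_n)_{n∈ℤ} is a ℤ-grading of A: A is the internal direct sum of the A_n, 1 ∈ A_0, and A_n · A_m ⊆ A_{n+m} for all n, m ∈ ℤ. -/

import Mathlib

open scoped TensorProduct

/-- The counit `ε : R[t,t⁻¹] → R` of the Hopf algebra of Laurent polynomials,
determined by `ε(tⁿ) = 1`. -/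
noncomputable def counitT (R : Type*) [CommRing R] : LaurentPolynomial R →ₐ[R] R :=
  (AddMonoidAlgebra.lift (R := R) (M := ℤ) (A := R)) 1

/-- The comultiplication `Δ : R[t,t⁻¹] → R[t,t⁻¹] ⊗_R R[t,t⁻¹]` of the Hopf algebra of
Laurent polynomials, determined by `Δ(tⁿ) = tⁿ ⊗ tⁿ`. -/
noncomputable def comulT (R : Type*) [CommRing R] :
    LaurentPolynomial R →ₐ[R] LaurentPolynomial R ⊗[R] LaurentPolynomial R :=
  (AddMonoidAlgebra.lift (R := R) (M := ℤ) (A := LaurentPolynomial R ⊗[R] LaurentPolynomial R))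
    { toFun := fun n => LaurentPolynomial.T n.toAdd ⊗ₜ[R] LaurentPolynomial.T n.toAdd
      map_one' := by
        simp only [toAdd_one, LaurentPolynomial.T_zero, Algebra.TensorProduct.one_def]
      map_mul' := fun x y => by
        simp only [toAdd_mul, LaurentPolynomial.T_add, Algebra.TensorProduct.tmul_mul_tmul] }

/-- `μ : A → R[t,t⁻¹] ⊗_R A` is a coaction of the Hopf algebra `R[t,t⁻¹]` on `A`:
it satisfies the counit axiom `(ε ⊗ id_A) ∘ μ = id_A` and the coassociativity axiom
`(Δ ⊗ id_A) ∘ μ = (id ⊗ μ) ∘ μ`. -/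
def IsCoaction {R A : Type*} [CommRing R] [CommRing A] [Algebra R A]
    (μ : A →ₐ[R] LaurentPolynomial R ⊗[R] A) : Prop :=
  ((Algebra.TensorProduct.lid R A).toAlgHom.comp
      ((Algebra.TensorProduct.map (counitT R) (AlgHom.id R A)).comp μ) = AlgHom.id R A) ∧
  ((Algebra.TensorProduct.assoc R R R (LaurentPolynomial R) (LaurentPolynomial R) A).toAlgHom.comp
      ((Algebra.TensorProduct.map (comulT R) (AlgHom.id R A)).comp μ)
    = (Algebra.TensorProduct.map (AlgHom.id R (LaurentPolynomial R)) μ).comp μ)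

/-- A ℤ-grading of the commutative `R`-algebra `A`: a family of `R`-submodules whose internal
direct sum is `A`, with `1 ∈ A₀` and `Aₙ · Aₘ ⊆ A_{n+m}`. -/
def IsGrading {R A : Type*} [CommRing R] [CommRing A] [Algebra R A]
    (𝒜 : ℤ → Submodule R A) : Prop :=
  DirectSum.IsInternal 𝒜 ∧ (1 : A) ∈ 𝒜 0 ∧
    ∀ n m : ℤ, ∀ a ∈ 𝒜 n, ∀ b ∈ 𝒜 m, a * b ∈ 𝒜 (n + m)

noncomputable def lpEquiv (R : Type*) [CommRing R] (N : Type*) [AddCommGroup N] [Module R N] :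
    LaurentPolynomial R ⊗[R] N ≃ₗ[R] (ℤ →₀ N) :=
  (TensorProduct.congr (AddMonoidAlgebra.coeffLinearEquiv R) (LinearEquiv.refl R N)).trans
    (TensorProduct.finsuppScalarLeft R N ℤ)

noncomputable def projP {R : Type*} [CommRing R] (N : Type*) [AddCommGroup N] [Module R N] (n : ℤ) :
    LaurentPolynomial R ⊗[R] N →ₗ[R] N :=
  Finsupp.lapply n ∘ₗ (lpEquiv R N).toLinearMap

theorem projP_tmul {R : Type*} [CommRing R] {N : Type*} [AddCommGroup N] [Module R N] (n : ℤ)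
    (f : LaurentPolynomial R) (x : N) :
    projP N n (f ⊗ₜ[R] x) = f.coeff n • x :=
  TensorProduct.finsuppScalarLeft_apply_tmul_apply f.coeff x n

theorem projP_single_tmul {R : Type*} [CommRing R] {N : Type*} [AddCommGroup N] [Module R N]
    (n k : ℤ) (r : R) (x : N) :
    projP N n ((AddMonoidAlgebra.single k r : LaurentPolynomial R) ⊗ₜ[R] x)
      = if k = n then r • x else 0 := by
  rw [projP_tmul]
  show (Finsupp.single k r : ℤ →₀ R) n • x = _
  rw [Finsupp.single_apply]
  split <;> simp_all

theorem projP_T_tmul {R : Type*} [CommRing R] {N : Type*} [AddCommGroup N] [Module R N]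
    (n k : ℤ) (x : N) :
    projP N n (LaurentPolynomial.T k ⊗ₜ[R] x) = if k = n then x else 0 := by
  rw [LaurentPolynomial.T, projP_single_tmul]; split <;> simp

theorem counit_comp_eq (R A : Type*) [CommRing R] [CommRing A] [Algebra R A] :
    (Algebra.TensorProduct.lid R A).toLinearMap ∘ₗ
      (Algebra.TensorProduct.map (counitT R) (AlgHom.id R A)).toLinearMap
    = (Finsupp.lsum R fun _ : ℤ => (LinearMap.id : A →ₗ[R] A)) ∘ₗ
        (lpEquiv R A).toLinearMap := by
  apply TensorProduct.ext'
  intro f a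
  induction f using AddMonoidAlgebra.induction_linear with
  | zero => simp [TensorProduct.zero_tmul]
  | add f g hf hg =>
      simp only [LinearMap.comp_apply] at hf hg ⊢
      rw [show (f + g : LaurentPolynomial R) ⊗ₜ[R] a
            = (f : LaurentPolynomial R) ⊗ₜ[R] a + (g : LaurentPolynomial R) ⊗ₜ[R] a from
          TensorProduct.add_tmul f g a]
      simp only [map_add, hf, hg]
  | single k r =>
      simp only [LinearMap.comp_apply, AlgEquiv.toLinearMap_apply, AlgHom.toLinearMap_apply,
        LinearEquiv.coe_coe]
      rw [Algebra.TensorProduct.map_tmul]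
      rw [show counitT R (AddMonoidAlgebra.single k r) = r by
        simpa [counitT] using AddMonoidAlgebra.lift_single (1 : Multiplicative ℤ →* R)
          k r]
      rw [Algebra.TensorProduct.lid_tmul]
      have h2 : (lpEquiv R A)
          ((AddMonoidAlgebra.single k r : LaurentPolynomial R) ⊗ₜ[R] a) = Finsupp.single k (r • a) :=
        Finsupp.ext fun i => by
          show (TensorProduct.finsuppScalarLeft R A ℤ)
            ((Finsupp.single k r : ℤ →₀ R) ⊗ₜ[R] a) i = _
          rw [TensorProduct.finsuppScalarLeft_apply_tmul_apply (Finsupp.single k r) a i]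
          show (Finsupp.single k r : ℤ →₀ R) i • a = _
          rw [Finsupp.single_apply, Finsupp.single_apply]
          split <;> simp
      erw [h2, Finsupp.lsum_single]
      simp

theorem comulT_single (R : Type*) [CommRing R] (k : ℤ) (r : R) :
    comulT R (AddMonoidAlgebra.single k r)
      = (AddMonoidAlgebra.single k r : LaurentPolynomial R) ⊗ₜ[R] LaurentPolynomial.T k := by
  have h : comulT R (AddMonoidAlgebra.single k r)
      = r • (LaurentPolynomial.T k ⊗ₜ[R] LaurentPolynomial.T k) :=
    AddMonoidAlgebra.lift_single _ k r
  rw [h, TensorProduct.smul_tmul']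
  congr 1
  show r • (AddMonoidAlgebra.single k (1 : R) : LaurentPolynomial R) = AddMonoidAlgebra.single k r
  rw [AddMonoidAlgebra.smul_single, smul_eq_mul, mul_one]

theorem projP_comp_assoc_comulT (R A : Type*) [CommRing R] [CommRing A] [Algebra R A] (n : ℤ) :
    projP (LaurentPolynomial R ⊗[R] A) n ∘ₗ
      ((Algebra.TensorProduct.assoc R R R (LaurentPolynomial R) (LaurentPolynomial R) A).toLinearMap ∘ₗ
        (Algebra.TensorProduct.map (comulT R) (AlgHom.id R A)).toLinearMap)
    = (TensorProduct.mk R (LaurentPolynomial R) A (LaurentPolynomial.T n)) ∘ₗ projP A n := by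
  apply TensorProduct.ext'
  intro f a
  induction f using AddMonoidAlgebra.induction_linear with
  | zero =>
      rw [show (0 : LaurentPolynomial R) ⊗ₜ[R] a
            = (0 : LaurentPolynomial R ⊗[R] A) from TensorProduct.zero_tmul _ a]
      simp only [map_zero]
  | add f g hf hg =>
      simp only [LinearMap.comp_apply] at hf hg ⊢
      rw [show (f + g : LaurentPolynomial R) ⊗ₜ[R] a
            = (f : LaurentPolynomial R) ⊗ₜ[R] a + (g : LaurentPolynomial R) ⊗ₜ[R] a from
          TensorProduct.add_tmul f g a]
      simp only [map_add, hf, hg]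
  | single k r =>
      simp only [LinearMap.comp_apply, AlgEquiv.toLinearMap_apply, AlgHom.toLinearMap_apply]
      rw [Algebra.TensorProduct.map_tmul, comulT_single, AlgHom.coe_id, id_eq]
      rw [Algebra.TensorProduct.assoc_tmul]
      erw [projP_single_tmul, projP_single_tmul]
      rw [TensorProduct.mk_apply]
      split
      · rename_i h; subst h
        rw [TensorProduct.tmul_smul, TensorProduct.smul_tmul']
      · rw [TensorProduct.tmul_zero]

theorem projP_comp_map_id {R A : Type*} [CommRing R] [CommRing A] [Algebra R A]
    (μ : A →ₐ[R] LaurentPolynomial R ⊗[R] A) (n : ℤ) :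
    projP (LaurentPolynomial R ⊗[R] A) n ∘ₗ
      (Algebra.TensorProduct.map (AlgHom.id R (LaurentPolynomial R)) μ).toLinearMap
    = μ.toLinearMap ∘ₗ projP A n := by
  apply TensorProduct.ext'
  intro f a
  simp only [LinearMap.comp_apply, AlgHom.toLinearMap_apply]
  rw [Algebra.TensorProduct.map_tmul, AlgHom.coe_id, id_eq]
  rw [projP_tmul, projP_tmul, map_smul]

/-- Given a coaction `μ♯ : A → R[t,t⁻¹] ⊗_R A` of the Hopf algebra
`R[t,t⁻¹]` on the commutative `R`-algebra `A`, the subsets `Aₙ = {a ∈ A : μ♯(a) = tⁿ ⊗ a}`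
are `R`-submodules of `A` and the family `(Aₙ)` is a ℤ-grading of `A`: `A` is the internal
direct sum of the `Aₙ`, `1 ∈ A₀`, and `Aₙ · Aₘ ⊆ A_{n+m}` for all `n, m`. -/
theorem coaction_gives_grading {R A : Type*} [CommRing R] [CommRing A] [Algebra R A]
    (μ : A →ₐ[R] LaurentPolynomial R ⊗[R] A) (hμ : IsCoaction μ) :
    ∃ 𝒜 : ℤ → Submodule R A,
      (∀ (n : ℤ) (a : A), a ∈ 𝒜 n ↔ μ a = LaurentPolynomial.T n ⊗ₜ[R] a) ∧ IsGrading 𝒜 := by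
  classical
  obtain ⟨hcounit, hcoassoc⟩ := hμ
  set 𝒜 : ℤ → Submodule R A := fun n =>
    { carrier := {a : A | μ a = LaurentPolynomial.T n ⊗ₜ[R] a}
      add_mem' := fun {a b} ha hb => by
        simp only [Set.mem_setOf_eq] at *
        rw [map_add, ha, hb, TensorProduct.tmul_add]
      zero_mem' := by simp [Set.mem_setOf_eq]
      smul_mem' := fun r a ha => by
        simp only [Set.mem_setOf_eq] at *
        rw [map_smul, ha, TensorProduct.tmul_smul] } with h𝒜
  have hmem : ∀ (n : ℤ) (a : A), a ∈ 𝒜 n ↔ μ a = LaurentPolynomial.T n ⊗ₜ[R] a :=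
    fun n a => Iff.rfl
  set c : ℤ → A →ₗ[R] A := fun n => projP A n ∘ₗ μ.toLinearMap with hc
  -- each component lies in the right piece
  have hcn : ∀ (n : ℤ) (a : A), c n a ∈ 𝒜 n := by
    intro n a
    have h1 := DFunLike.congr_fun hcoassoc a
    simp only [AlgHom.coe_comp, Function.comp_apply, AlgEquiv.toAlgHom_eq_coe,
      AlgHom.coe_coe, AlgEquiv.coe_algHom] at h1
    have h2 := congrArg (projP (LaurentPolynomial R ⊗[R] A) n) h1
    have h3 := LinearMap.congr_fun (projP_comp_assoc_comulT R A n) (μ a)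
    have h4 := LinearMap.congr_fun (projP_comp_map_id μ n) (μ a)
    simp only [LinearMap.comp_apply, AlgEquiv.toLinearMap_apply, AlgHom.toLinearMap_apply,
      TensorProduct.mk_apply] at h3 h4
    rw [hmem]
    show μ (projP A n (μ a)) = _
    rw [← h4, ← h2, h3]
    rfl
  -- projections of pieces
  have hproj : ∀ (n m : ℤ) (v : A), v ∈ 𝒜 m → c n v = if m = n then v else 0 := by
    intro n m v hv
    rw [hmem] at hv
    show projP A n (μ v) = _
    rw [hv, projP_T_tmul]
  -- decomposition
  have hdecomp : ∀ a : A,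
      a = ((lpEquiv R A) (μ a)).sum fun _ x => x := by
    intro a
    have h1 := DFunLike.congr_fun hcounit a
    simp only [AlgHom.coe_comp, Function.comp_apply, AlgEquiv.toAlgHom_eq_coe,
      AlgHom.coe_coe, AlgHom.coe_id, id_eq] at h1
    have h2 := LinearMap.congr_fun (counit_comp_eq R A) (μ a)
    simp only [LinearMap.comp_apply, AlgEquiv.toLinearMap_apply, AlgHom.toLinearMap_apply,
      LinearEquiv.coe_coe, Finsupp.lsum_apply] at h2
    exact h1.symm.trans (h2.trans rfl)
  have hsup : iSup 𝒜 = ⊤ := by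
    rw [eq_top_iff]
    intro a _
    rw [hdecomp a]
    refine Submodule.finsuppSum_mem _ _ _ _ fun i _ => ?_
    refine Submodule.mem_iSup_of_mem i ?_
    exact hcn i a
  have hind : iSupIndep 𝒜 := by
    intro n
    rw [Submodule.disjoint_def]
    intro x hx hx'
    have hker : (⨆ m, ⨆ _ : m ≠ n, 𝒜 m) ≤ LinearMap.ker (c n) := by
      refine iSup_le fun m => iSup_le fun hmn v hv => ?_
      rw [LinearMap.mem_ker, hproj n m v hv, if_neg hmn]
    have h0 : c n x = 0 := hker hx'
    have h1 : c n x = x := by rw [hproj n n x hx, if_pos rfl]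
    rw [← h1, h0]
  refine ⟨𝒜, hmem, ?_, ?_, ?_⟩
  · exact (DirectSum.isInternal_submodule_iff_iSupIndep_and_iSup_eq_top 𝒜).2 ⟨hind, hsup⟩
  · rw [hmem, map_one, LaurentPolynomial.T_zero, Algebra.TensorProduct.one_def]
  · intro n m a ha b hb
    rw [hmem] at ha hb ⊢
    rw [map_mul, ha, hb, Algebra.TensorProduct.tmul_mul_tmul, ← LaurentPolynomial.T_add]
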